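/- Suppose ρ(A) > 0 and let W = I_m − αL with α a real number satisfying α > 0 and λ_2^{-1}(1 − ρ(A)^{-1}) < α < λ_m^{-1}(1 + ρ(A)^{-1}). If μ_W is a real eigenvalue of W and μ_A is a complex eigenvalue of A such that |μ_W μ_A| ≥ 1, then μ_W = 1. -/

import Mathlib

open Matrix Kronecker Polynomial

lemma eval_charpoly_aux {k : ℕ} (M : Matrix (Fin k) (Fin k) ℝ) (t : ℝ) :
    (M.charpoly).eval t = (Matrix.diagonal (fun _ => t) - M).det := by
  rw [Matrix.charpoly, ← Polynomial.coe_evalRingHom, RingHom.map_det]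
  congr 1
  ext i j
  by_cases h : i = j <;> simp [charmatrix_apply, h, Matrix.diagonal]

/-- With L the Laplacian of a connected graph on m > 2 vertices,
eigenvalues 0 = λ₁ < λ₂ ≤ ⋯ ≤ λₘ, ρ(A) > 0, and W = I − αL with α > 0 and
λ₂⁻¹(1 − ρ(A)⁻¹) < α < λₘ⁻¹(1 + ρ(A)⁻¹): if μ_W is a real eigenvalue of W and μ_A a
complex eigenvalue of A with |μ_W μ_A| ≥ 1, then μ_W = 1. -/
theorem stmt6 (m n : ℕ) (hm : 2 < m)
    (G : SimpleGraph (Fin m)) [DecidableRel G.Adj]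
    (L : Matrix (Fin m) (Fin m) ℝ) (hL : L = G.lapMatrix ℝ)
    (hconn : G.Connected)
    (eig : Fin m → ℝ) (heig_mono : Monotone eig)
    (hchar : L.charpoly = ∏ i, (X - C (eig i)))
    (heig0 : eig ⟨0, by omega⟩ = 0) (heig1 : 0 < eig ⟨1, by omega⟩)
    (A : Matrix (Fin n) (Fin n) ℝ)
    -- ρA is the spectral radius of A
    (ρA : ℝ) (hρ_pos : 0 < ρA)
    (hρ_ub : ∀ μ : ℂ, (∃ v : Fin n → ℂ, v ≠ 0 ∧
        (A.map Complex.ofReal).mulVec v = μ • v) → ‖μ‖ ≤ ρA)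
    (hρ_mem : ∃ μ : ℂ, (∃ v : Fin n → ℂ, v ≠ 0 ∧
        (A.map Complex.ofReal).mulVec v = μ • v) ∧ ‖μ‖ = ρA)
    (α : ℝ) (hα_pos : 0 < α)
    (hα_lo : (eig ⟨1, by omega⟩)⁻¹ * (1 - ρA⁻¹) < α)
    (hα_hi : α < (eig ⟨m - 1, by omega⟩)⁻¹ * (1 + ρA⁻¹))
    (W : Matrix (Fin m) (Fin m) ℝ) (hW : W = 1 - α • L)
    (μW : ℝ) (hμW : ∃ v : Fin m → ℝ, v ≠ 0 ∧ W.mulVec v = μW • v)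
    (μA : ℂ) (hμA : ∃ v : Fin n → ℂ, v ≠ 0 ∧
      (A.map Complex.ofReal).mulVec v = μA • v)
    (hmod : 1 ≤ ‖(μW : ℂ) * μA‖) :
    μW = 1 := by
  obtain ⟨v, hv, hvW⟩ := hμW
  set lam : ℝ := (1 - μW) / α with hlam
  -- v is an eigenvector of L with eigenvalue lam
  have hvL : L.mulVec v = lam • v := by
    have h1 : W.mulVec v = v - α • L.mulVec v := by
      rw [hW, sub_mulVec, one_mulVec, smul_mulVec]
    have h2 : α • L.mulVec v = (1 - μW) • v := by
      have := hvW
      rw [h1] at this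
      have : α • L.mulVec v = v - μW • v := by
        rw [← this]; abel
      rw [this, sub_smul, one_smul]
    have := congrArg (fun w => α⁻¹ • w) h2
    simpa [smul_smul, inv_mul_cancel₀ (ne_of_gt hα_pos), hlam, div_eq_inv_mul,
      mul_comm] using this
  -- lam is a root of the characteristic polynomial
  have hdet : (Matrix.diagonal (fun _ : Fin m => lam) - L).det = 0 := by
    rw [← Matrix.exists_mulVec_eq_zero_iff]
    refine ⟨v, hv, ?_⟩
    have hdiag : (Matrix.diagonal (fun _ : Fin m => lam)).mulVec v = lam • v := by
      ext i; simp [Matrix.mulVec_diagonal]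
    rw [sub_mulVec, hdiag, hvL, sub_self]
  have heval : (L.charpoly).eval lam = 0 := by
    rw [eval_charpoly_aux]; exact hdet
  rw [hchar, eval_prod] at heval
  simp only [eval_sub, eval_X, eval_C] at heval
  obtain ⟨i, -, hi⟩ := Finset.prod_eq_zero_iff.mp heval
  have hlam_eq : lam = eig i := by linarith [sub_eq_zero.mp hi]
  -- case split on whether i = 0
  rcases Nat.eq_zero_or_pos i.val with h0 | h1
  · -- lam = 0, hence μW = 1
    have : i = ⟨0, by omega⟩ := Fin.ext h0
    rw [this, heig0] at hlam_eq
    have : 1 - μW = 0 := by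
      have := hlam_eq
      rw [hlam, _root_.div_eq_zero_iff] at this
      rcases this with h | h
      · exact h
      · exact absurd h (ne_of_gt hα_pos)
    linarith
  · -- lam ∈ [eig 1, eig (m-1)], derive contradiction with hmod
    exfalso
    have hle1 : eig ⟨1, by omega⟩ ≤ lam := by
      rw [hlam_eq]; exact heig_mono (by simp [Fin.le_def]; omega)
    have hle2 : lam ≤ eig ⟨m - 1, by omega⟩ := by
      rw [hlam_eq]; exact heig_mono (by simp [Fin.le_def]; omega)
    have heigm : 0 < eig ⟨m - 1, by omega⟩ := lt_of_lt_of_le heig1 (le_trans hle1 hle2)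
    -- from hα_lo : 1 - ρA⁻¹ < α * eig 1 ≤ α * lam
    have hlow : 1 - ρA⁻¹ < α * lam := by
      have h1 : 1 - ρA⁻¹ < α * eig ⟨1, by omega⟩ := by
        have := (div_lt_iff₀ heig1).mp (by
          rwa [inv_mul_eq_div] at hα_lo)
        linarith [mul_comm α (eig ⟨1, by omega⟩)]
      have h2 : α * eig ⟨1, by omega⟩ ≤ α * lam :=
        mul_le_mul_of_nonneg_left hle1 (le_of_lt hα_pos)
      linarith
    -- from hα_hi : α * lam ≤ α * eig (m-1) < 1 + ρA⁻¹
    have hhigh : α * lam < 1 + ρA⁻¹ := by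
      have h1 : α * eig ⟨m - 1, by omega⟩ < 1 + ρA⁻¹ := by
        have h := (lt_div_iff₀ heigm).mp (by rwa [inv_mul_eq_div] at hα_hi)
        calc α * eig ⟨m - 1, by omega⟩ = eig ⟨m - 1, by omega⟩ * α := mul_comm _ _
          _ < 1 + ρA⁻¹ := by
            rw [mul_comm] at h
            exact (lt_div_iff₀ heigm).mp (by rwa [inv_mul_eq_div] at hα_hi) |> fun hh => by nlinarith
      have h2 : α * lam ≤ α * eig ⟨m - 1, by omega⟩ :=
        mul_le_mul_of_nonneg_left hle2 (le_of_lt hα_pos)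
      linarith
    -- μW = 1 - α * lam, so |μW| < ρA⁻¹
    have hμW_eq : μW = 1 - α * lam := by
      have h : α * lam = 1 - μW := by
        rw [hlam]; field_simp
      linarith
    have habs : |μW| < ρA⁻¹ := by
      rw [abs_lt, hμW_eq]; constructor <;> linarith
    have hμA_le : ‖μA‖ ≤ ρA := hρ_ub μA hμA
    have : ‖(μW : ℂ) * μA‖ < 1 := by
      rw [norm_mul, Complex.norm_real, Real.norm_eq_abs]
      calc |μW| * ‖μA‖ ≤ |μW| * ρA :=
            mul_le_mul_of_nonneg_left hμA_le (abs_nonneg _)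
        _ < ρA⁻¹ * ρA := by
            apply mul_lt_mul_of_pos_right habs hρ_pos
        _ = 1 := inv_mul_cancel₀ (ne_of_gt hρ_pos)
    linarith
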